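/- Let 𝓙 = [[𝓙₁,𝓙₂],[𝓙₃,𝓙₄]] and 𝓙' = [[𝓙₁,𝓙₂'],[𝓙₃,𝓙₄]] be two generalized complex structures on a finite-dimensional real vector space V that differ only in their (1,2)-block. Then there exists a skew-symmetric linear map β : V* → V such that 𝓑' 𝓙 𝓑'⁻¹ = 𝓙', where 𝓑' = [[1,β],[0,1]]; moreover, β is unique subject to the additional constraint that 𝓙₁ ∘ β : V* → V is skew-symmetric. -/

import Mathlib

open Module LinearMap

noncomputable def gcPair (V : Type*) [AddCommGroup V] [Module ℝ V]
    (x y : V × Module.Dual ℝ V) : ℝ :=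
  -(1/2) * (x.2 y.1 + y.2 x.1)

noncomputable def IsGCS (V : Type*) [AddCommGroup V] [Module ℝ V]
    (J : (V × Module.Dual ℝ V) →ₗ[ℝ] (V × Module.Dual ℝ V)) : Prop :=
  J ∘ₗ J = -LinearMap.id ∧ ∀ x y, gcPair V (J x) (J y) = gcPair V x y

section Blocks

variable (V : Type*) [AddCommGroup V] [Module ℝ V]

noncomputable def blk1 (J : (V × Module.Dual ℝ V) →ₗ[ℝ] (V × Module.Dual ℝ V)) :
    V →ₗ[ℝ] V :=
  (LinearMap.fst ℝ V (Module.Dual ℝ V)) ∘ₗ J ∘ₗ (LinearMap.inl ℝ V (Module.Dual ℝ V))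

noncomputable def blk2 (J : (V × Module.Dual ℝ V) →ₗ[ℝ] (V × Module.Dual ℝ V)) :
    Module.Dual ℝ V →ₗ[ℝ] V :=
  (LinearMap.fst ℝ V (Module.Dual ℝ V)) ∘ₗ J ∘ₗ (LinearMap.inr ℝ V (Module.Dual ℝ V))

noncomputable def blk3 (J : (V × Module.Dual ℝ V) →ₗ[ℝ] (V × Module.Dual ℝ V)) :
    V →ₗ[ℝ] Module.Dual ℝ V :=
  (LinearMap.snd ℝ V (Module.Dual ℝ V)) ∘ₗ J ∘ₗ (LinearMap.inl ℝ V (Module.Dual ℝ V))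

noncomputable def blk4 (J : (V × Module.Dual ℝ V) →ₗ[ℝ] (V × Module.Dual ℝ V)) :
    Module.Dual ℝ V →ₗ[ℝ] Module.Dual ℝ V :=
  (LinearMap.snd ℝ V (Module.Dual ℝ V)) ∘ₗ J ∘ₗ (LinearMap.inr ℝ V (Module.Dual ℝ V))

/-- The endomorphism of `V ⊕ V*` with block matrix `[[A,B],[C,D]]`. -/
noncomputable def ofBlocks (A : V →ₗ[ℝ] V) (B : Module.Dual ℝ V →ₗ[ℝ] V)
    (C : V →ₗ[ℝ] Module.Dual ℝ V) (D : Module.Dual ℝ V →ₗ[ℝ] Module.Dual ℝ V) :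
    (V × Module.Dual ℝ V) →ₗ[ℝ] (V × Module.Dual ℝ V) :=
  LinearMap.prod
    (A ∘ₗ LinearMap.fst ℝ V (Module.Dual ℝ V) + B ∘ₗ LinearMap.snd ℝ V (Module.Dual ℝ V))
    (C ∘ₗ LinearMap.fst ℝ V (Module.Dual ℝ V) + D ∘ₗ LinearMap.snd ℝ V (Module.Dual ℝ V))

/-- Skew-symmetry for a map `V → V*`. -/
def SkewF (B : V →ₗ[ℝ] Module.Dual ℝ V) : Prop := ∀ u v : V, B u v = -(B v u)

/-- Skew-symmetry for a map `V* → V`. -/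
def SkewB (β : Module.Dual ℝ V →ₗ[ℝ] V) : Prop :=
  ∀ f g : Module.Dual ℝ V, f (β g) = -(g (β f))

/-- The B-field automorphism `[[1,0],[B,1]]`. -/
noncomputable def calB (B : V →ₗ[ℝ] Module.Dual ℝ V) :
    (V × Module.Dual ℝ V) →ₗ[ℝ] (V × Module.Dual ℝ V) :=
  ofBlocks V LinearMap.id 0 B LinearMap.id

/-- The β-field automorphism `[[1,β],[0,1]]`. -/
noncomputable def calBeta (β : Module.Dual ℝ V →ₗ[ℝ] V) :
    (V × Module.Dual ℝ V) →ₗ[ℝ] (V × Module.Dual ℝ V) :=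
  ofBlocks V LinearMap.id β 0 LinearMap.id

/-- A GCS is complex if it equals `[[J,0],[0,-J*]]` for a complex structure `J` on `V`. -/
noncomputable def IsComplexGCS (J : (V × Module.Dual ℝ V) →ₗ[ℝ] (V × Module.Dual ℝ V)) :
    Prop :=
  ∃ Jc : V →ₗ[ℝ] V, Jc ∘ₗ Jc = -LinearMap.id ∧
    J = ofBlocks V Jc 0 0 (-(Jc.dualMap))

/-- A GCS is symplectic if it equals `[[0,-ω⁻¹],[ω,0]]` for a nondegenerate
skew-symmetric `ω : V → V*`. -/
noncomputable def IsSymplecticGCS (J : (V × Module.Dual ℝ V) →ₗ[ℝ] (V × Module.Dual ℝ V)) :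
    Prop :=
  ∃ (ω : V →ₗ[ℝ] Module.Dual ℝ V) (ω' : Module.Dual ℝ V →ₗ[ℝ] V),
    SkewF V ω ∧ ω' ∘ₗ ω = LinearMap.id ∧ ω ∘ₗ ω' = LinearMap.id ∧
      J = ofBlocks V 0 (-ω') ω 0

/-- B-field transform of a complex GCS. -/
noncomputable def IsBComplex (J : (V × Module.Dual ℝ V) →ₗ[ℝ] (V × Module.Dual ℝ V)) :
    Prop :=
  ∃ B : V →ₗ[ℝ] Module.Dual ℝ V, SkewF V B ∧
    ∃ J₀, IsComplexGCS V J₀ ∧ J = calB V B ∘ₗ J₀ ∘ₗ calB V (-B)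

/-- β-field transform of a complex GCS. -/
noncomputable def IsBetaComplex (J : (V × Module.Dual ℝ V) →ₗ[ℝ] (V × Module.Dual ℝ V)) :
    Prop :=
  ∃ β : Module.Dual ℝ V →ₗ[ℝ] V, SkewB V β ∧
    ∃ J₀, IsComplexGCS V J₀ ∧ J = calBeta V β ∘ₗ J₀ ∘ₗ calBeta V (-β)

/-- B-field transform of a symplectic GCS. -/
noncomputable def IsBSymplectic (J : (V × Module.Dual ℝ V) →ₗ[ℝ] (V × Module.Dual ℝ V)) :
    Prop :=
  ∃ B : V →ₗ[ℝ] Module.Dual ℝ V, SkewF V B ∧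
    ∃ J₀, IsSymplecticGCS V J₀ ∧ J = calB V B ∘ₗ J₀ ∘ₗ calB V (-B)

/-- β-field transform of a symplectic GCS. -/
noncomputable def IsBetaSymplectic (J : (V × Module.Dual ℝ V) →ₗ[ℝ] (V × Module.Dual ℝ V)) :
    Prop :=
  ∃ β : Module.Dual ℝ V →ₗ[ℝ] V, SkewB V β ∧
    ∃ J₀, IsSymplecticGCS V J₀ ∧ J = calBeta V β ∘ₗ J₀ ∘ₗ calBeta V (-β)

end Blocks

theorem blk_apply' {V : Type*} [AddCommGroup V] [Module ℝ V]
    (J : (V × Module.Dual ℝ V) →ₗ[ℝ] (V × Module.Dual ℝ V)) (v : V) (f : Module.Dual ℝ V) :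
    J (v, f) = (blk1 V J v + blk2 V J f, blk3 V J v + blk4 V J f) := by
  have h : (v, f) = ((v, (0 : Module.Dual ℝ V))) + (((0 : V), f)) := by simp
  rw [h, map_add]
  rfl

theorem calBeta_apply' {V : Type*} [AddCommGroup V] [Module ℝ V]
    (b : Module.Dual ℝ V →ₗ[ℝ] V) (v : V) (f : Module.Dual ℝ V) :
    calBeta V b (v, f) = (v + b f, f) := by
  simp [calBeta, ofBlocks]

theorem gcPair_anti {V : Type*} [AddCommGroup V] [Module ℝ V]
    (J : (V × Module.Dual ℝ V) →ₗ[ℝ] (V × Module.Dual ℝ V)) (hJ : IsGCS V J)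
    (x y : V × Module.Dual ℝ V) : gcPair V (J x) y = -gcPair V x (J y) := by
  obtain ⟨hJ2, hJp⟩ := hJ
  have hy : J (J y) = -y := by
    have := LinearMap.ext_iff.mp hJ2 y
    simpa using this
  have h1 : gcPair V (J x) (J (J y)) = gcPair V x (J y) := hJp x (J y)
  rw [hy] at h1
  have h2 : gcPair V (J x) (-y) = -gcPair V (J x) y := by
    simp only [gcPair, Prod.fst_neg, Prod.snd_neg, map_neg, LinearMap.neg_apply]
    ring
  rw [h2] at h1
  linarith

set_option maxHeartbeats 2000000 in
theorem exists_beta_transform_of_eq_blocks_134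
    (V : Type*) [AddCommGroup V] [Module ℝ V] [FiniteDimensional ℝ V]
    (J J' : (V × Module.Dual ℝ V) →ₗ[ℝ] (V × Module.Dual ℝ V))
    (hJ : IsGCS V J) (hJ' : IsGCS V J')
    (h1 : blk1 V J = blk1 V J') (h3 : blk3 V J = blk3 V J') (h4 : blk4 V J = blk4 V J') :
    (∃ β : Module.Dual ℝ V →ₗ[ℝ] V, SkewB V β ∧
        calBeta V β ∘ₗ J ∘ₗ calBeta V (-β) = J') ∧
    (∃! β : Module.Dual ℝ V →ₗ[ℝ] V, SkewB V β ∧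
        calBeta V β ∘ₗ J ∘ₗ calBeta V (-β) = J' ∧ SkewB V (blk1 V J ∘ₗ β)) := by
  classical
  set A := blk1 V J with hAdef
  set B := blk2 V J with hBdef
  set C := blk3 V J with hCdef
  set D := blk4 V J with hDdef
  set B' := blk2 V J' with hB'def
  have hJapp : ∀ (v : V) (f : Module.Dual ℝ V), J (v, f) = (A v + B f, C v + D f) :=
    fun v f => blk_apply' J v f
  have hJ'app : ∀ (v : V) (f : Module.Dual ℝ V), J' (v, f) = (A v + B' f, C v + D f) := by
    intro v f
    rw [blk_apply' J' v f, ← h1, ← h3, ← h4]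
  obtain ⟨hJ2, hJp⟩ := hJ
  obtain ⟨hJ'2, hJ'p⟩ := hJ'
  -- square relations for J
  have hv : ∀ v : V, (A (A v) + B (C v), C (A v) + D (C v)) = (-v, (0 : Module.Dual ℝ V)) := by
    intro v
    have h := LinearMap.ext_iff.mp hJ2 (v, 0)
    rw [LinearMap.comp_apply, hJapp v 0] at h
    simp only [map_zero, add_zero] at h
    rw [hJapp] at h
    simpa using h
  have e1 : ∀ v : V, A (A v) + B (C v) = -v := fun v => congrArg Prod.fst (hv v)
  have e2 : ∀ v : V, C (A v) + D (C v) = 0 := fun v => congrArg Prod.snd (hv v)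
  have hf : ∀ f : Module.Dual ℝ V,
      (A (B f) + B (D f), C (B f) + D (D f)) = ((0 : V), -f) := by
    intro f
    have h := LinearMap.ext_iff.mp hJ2 (0, f)
    rw [LinearMap.comp_apply, hJapp 0 f] at h
    simp only [map_zero, zero_add] at h
    rw [hJapp] at h
    simpa using h
  have e3 : ∀ f, A (B f) + B (D f) = 0 := fun f => congrArg Prod.fst (hf f)
  have e4 : ∀ f, C (B f) + D (D f) = -f := fun f => congrArg Prod.snd (hf f)
  -- square relations for J'
  have hv' : ∀ v : V, (A (A v) + B' (C v), C (A v) + D (C v)) = (-v, (0 : Module.Dual ℝ V)) := by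
    intro v
    have h := LinearMap.ext_iff.mp hJ'2 (v, 0)
    rw [LinearMap.comp_apply, hJ'app v 0] at h
    simp only [map_zero, add_zero] at h
    rw [hJ'app] at h
    simpa using h
  have e1' : ∀ v : V, A (A v) + B' (C v) = -v := fun v => congrArg Prod.fst (hv' v)
  have hf' : ∀ f : Module.Dual ℝ V,
      (A (B' f) + B' (D f), C (B' f) + D (D f)) = ((0 : V), -f) := by
    intro f
    have h := LinearMap.ext_iff.mp hJ'2 (0, f)
    rw [LinearMap.comp_apply, hJ'app 0 f] at h
    simp only [map_zero, zero_add] at h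
    rw [hJ'app] at h
    simpa using h
  have e3' : ∀ f, A (B' f) + B' (D f) = 0 := fun f => congrArg Prod.fst (hf' f)
  have e4' : ∀ f, C (B' f) + D (D f) = -f := fun f => congrArg Prod.snd (hf' f)
  -- pairing relations
  have hanti := gcPair_anti J ⟨hJ2, hJp⟩
  have hanti' := gcPair_anti J' ⟨hJ'2, hJ'p⟩
  have hD : ∀ (g : Module.Dual ℝ V) (v : V), D g v = -(g (A v)) := by
    intro g v
    have h := hanti (v, 0) (0, g)
    rw [hJapp v 0, hJapp 0 g] at h
    simp only [map_zero, add_zero, zero_add, gcPair] at h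
    simp only [LinearMap.zero_apply, map_zero] at h
    linarith
  have hBskew : ∀ f g : Module.Dual ℝ V, f (B g) = -(g (B f)) := by
    intro f g
    have h := hanti (0, f) (0, g)
    rw [hJapp 0 f, hJapp 0 g] at h
    simp only [map_zero, zero_add, gcPair] at h
    linarith
  have hB'skew : ∀ f g : Module.Dual ℝ V, f (B' g) = -(g (B' f)) := by
    intro f g
    have h := hanti' (0, f) (0, g)
    rw [hJ'app 0 f, hJ'app 0 g] at h
    simp only [map_zero, zero_add, gcPair] at h
    linarith
  -- the difference δ = B' - B
  set δ : Module.Dual ℝ V →ₗ[ℝ] V := B' - B with hδdef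
  have hδapp : ∀ f, δ f = B' f - B f := fun f => rfl
  have hδskew : ∀ f g : Module.Dual ℝ V, f (δ g) = -(g (δ f)) := by
    intro f g
    have h1' := hBskew f g
    have h2' := hB'skew f g
    simp only [hδapp, map_sub]
    linarith
  have hδC : ∀ v : V, δ (C v) = 0 := by
    intro v
    have h := e1 v
    have h' := e1' v
    have : B' (C v) = B (C v) := by
      have := h.trans h'.symm
      exact (add_left_cancel this).symm
    rw [hδapp, this, sub_self]
  have hCδ : ∀ f, C (δ f) = 0 := by
    intro f
    have h := e4 f
    have h' := e4' f
    have hBB : C (B' f) = C (B f) := by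
      have h2' : C (B f) + D (D f) = C (B' f) + D (D f) := h.trans h'.symm
      exact (add_right_cancel h2').symm
    rw [hδapp, map_sub, hBB, sub_self]
  have hAδ : ∀ f, A (δ f) = -(δ (D f)) := by
    intro f
    have h := e3 f
    have h' := e3' f
    rw [hδapp, hδapp, map_sub]
    have hb : A (B f) = -(B (D f)) := by
      rw [eq_neg_iff_add_eq_zero]; exact h
    have hb' : A (B' f) = -(B' (D f)) := by
      rw [eq_neg_iff_add_eq_zero]; exact h'
    rw [hb, hb']
    abel
  have hDD : ∀ f, D (D f) = -f - C (B f) := by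
    intro f
    have h := e4 f
    rw [eq_sub_iff_add_eq, ← h]
    abel
  have hδDD : ∀ f, δ (D (D f)) = -(δ f) := by
    intro f
    rw [hDD, map_sub, map_neg, hδC, sub_zero]
  -- define β
  set β : Module.Dual ℝ V →ₗ[ℝ] V := (-(1/2) : ℝ) • (δ ∘ₗ D) with hβdef
  have hβapp : ∀ f, β f = (-(1/2) : ℝ) • δ (D f) := fun f => rfl
  have hAβ : ∀ f, A (β f) = (-(1/2) : ℝ) • δ f := by
    intro f
    rw [hβapp, map_smul, hAδ, hδDD]
    simp
  have hβD : ∀ f, β (D f) = ((1/2) : ℝ) • δ f := by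
    intro f
    rw [hβapp, hδDD]
    module
  have hβC : ∀ v : V, β (C v) = 0 := by
    intro v
    have hDC : D (C v) = -(C (A v)) := by
      rw [eq_neg_iff_add_eq_zero, add_comm]; exact e2 v
    rw [hβapp, hDC, map_neg, hδC, neg_zero, smul_zero]
  have hCβ : ∀ f, C (β f) = 0 := by
    intro f
    rw [hβapp, map_smul, hCδ, smul_zero]
  have hβskew : SkewB V β := by
    intro f g
    rw [hβapp, hβapp, map_smul, map_smul]
    have h1' : f (δ (D g)) = -((D g) (δ f)) := hδskew f (D g)
    have h2' : (D g) (δ f) = -(g (A (δ f))) := hD g (δ f)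
    rw [hAδ] at h2'
    simp only [map_neg] at h2'
    simp only [smul_eq_mul]
    rw [h1', h2']
    ring
  have hAβskew : SkewB V (A ∘ₗ β) := by
    intro f g
    simp only [LinearMap.comp_apply, hAβ, map_smul, smul_eq_mul]
    rw [hδskew f g]
    ring
  have hB'B : ∀ f, B' f = B f + δ f := by
    intro f
    rw [hδapp]; abel
  -- the conjugation identity
  have hconj : calBeta V β ∘ₗ J ∘ₗ calBeta V (-β) = J' := by
    apply LinearMap.ext
    rintro ⟨v, f⟩
    rw [LinearMap.comp_apply, LinearMap.comp_apply, calBeta_apply', hJapp, calBeta_apply',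
      hJ'app]
    simp only [LinearMap.neg_apply, map_add, map_neg, hβC, hCβ, hβD, hAβ, hB'B,
      map_zero, neg_zero, add_zero, zero_add, neg_neg]
    rw [Prod.mk.injEq]
    exact ⟨by module, by abel⟩
  constructor
  · exact ⟨β, hβskew, hconj⟩
  · refine ⟨β, ⟨hβskew, hconj, hAβskew⟩, ?_⟩
    rintro β' ⟨hsk', hconj', hAsk'⟩
    -- extract pointwise consequences of hconj'
    have hu1 : ∀ v : V, β' (C v) = 0 := by
      intro v
      have h := LinearMap.ext_iff.mp hconj' (v, 0)
      rw [LinearMap.comp_apply, LinearMap.comp_apply, calBeta_apply'] at h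
      try simp only [LinearMap.neg_apply, map_zero, neg_zero, add_zero] at h
      rw [hJapp, calBeta_apply', hJ'app] at h
      try simp only [map_zero, add_zero] at h
      have := congrArg Prod.fst h
      simpa using this
    have hu23 : ∀ f, C (β' f) = 0 ∧ β' (D f) - A (β' f) = δ f := by
      intro f
      have h := LinearMap.ext_iff.mp hconj' (0, f)
      rw [LinearMap.comp_apply, LinearMap.comp_apply, calBeta_apply'] at h
      try simp only [LinearMap.neg_apply, zero_add] at h
      rw [hJapp, calBeta_apply', hJ'app] at h
      simp only [LinearMap.neg_apply, map_add, map_neg, map_zero, zero_add] at h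
      have h2' := congrArg Prod.snd h
      simp only at h2'
      rw [add_eq_right] at h2'
      have hC0 : C (β' f) = 0 := neg_eq_zero.mp h2'
      refine ⟨hC0, ?_⟩
      have h1' := congrArg Prod.fst h
      simp only [hC0, map_zero, neg_zero, zero_add] at h1'
      rw [hδapp, ← h1']
      abel
    -- β also satisfies the same relation
    have hβrel : ∀ f, β (D f) - A (β f) = δ f := by
      intro f
      rw [hβD, hAβ]
      module
    set γ : Module.Dual ℝ V →ₗ[ℝ] V := β' - β with hγdef
    have hγapp : ∀ f, γ f = β' f - β f := fun f => LinearMap.sub_apply β' β f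
    have hγskew : ∀ f g : Module.Dual ℝ V, f (γ g) = -(g (γ f)) := by
      intro f g
      simp only [hγapp, map_sub]
      have := hsk' f g
      have := hβskew f g
      linarith
    have hAγ : ∀ f, A (γ f) = γ (D f) := by
      intro f
      have h1' := (hu23 f).2
      have h2' := hβrel f
      simp only [hγapp, map_sub]
      have : β' (D f) - A (β' f) = β (D f) - A (β f) := h1'.trans h2'.symm
      exact (sub_eq_sub_iff_sub_eq_sub.mp this).symm
    have hAγzero : ∀ f, A (γ f) = 0 := by
      intro f
      rw [← Module.forall_dual_apply_eq_zero_iff ℝ]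
      intro g
      -- symmetric
      have hsym : g (A (γ f)) = f (A (γ g)) := by
        rw [hAγ, hAγ]
        have h1' : f (γ (D g)) = -((D g) (γ f)) := hγskew f (D g)
        have h2' : (D g) (γ f) = -(g (A (γ f))) := hD g (γ f)
        rw [hAγ] at h2'
        rw [h1', h2']
        ring
      -- skew
      have hskw : f (A (γ g)) = -(g (A (γ f))) := by
        have ha := hAsk' f g
        have hb := hAβskew f g
        simp only [LinearMap.comp_apply] at ha hb
        simp only [hγapp, map_sub]
        linarith
      rw [hskw] at hsym
      linarith
    have hγzero : ∀ f, γ f = 0 := by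
      intro f
      have hC0 : C (γ f) = 0 := by
        simp only [hγapp, map_sub, (hu23 f).1, hCβ, sub_zero]
      have h := e1 (γ f)
      rw [hC0, map_zero, add_zero, hAγzero, map_zero] at h
      exact neg_eq_zero.mp h.symm
    apply LinearMap.ext
    intro f
    have := hγzero f
    rw [hγapp, sub_eq_zero] at this
    exact this
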